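/- Let H be a Hermitian matrix on a finite-dimensional Hilbert space and P an orthogonal projection. Then lim_{N→∞} (P e^{-iHt/N} P)^N = P e^{-itPHP} P in operator norm, for each fixed t ∈ ℝ. -/

import Mathlib

open Matrix NormedSpace Filter

section AbstractZeno

variable {A : Type*} [NormedRing A] [NormedAlgebra ℂ A] [CompleteSpace A]

omit [CompleteSpace A] in
lemma my_exp_norm_le (h1 : ‖(1 : A)‖ ≤ 1) (x : A) : ‖NormedSpace.exp x‖ ≤ Real.exp ‖x‖ := by
  rw [NormedSpace.exp_eq_tsum ℂ, Real.exp_eq_exp_ℝ, NormedSpace.exp_eq_tsum_div]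
  refine le_trans (norm_tsum_le_tsum_norm (norm_expSeries_summable' x)) ?_
  refine Summable.tsum_le_tsum ?_ (norm_expSeries_summable' x) (NormedSpace.expSeries_div_summable ‖x‖)
  intro m
  rw [norm_smul, norm_inv, Complex.norm_natCast, div_eq_inv_mul]
  refine mul_le_mul_of_nonneg_left ?_ (by positivity)
  cases m with
  | zero => simpa using h1
  | succ m => exact norm_pow_le' x m.succ_pos

lemma my_exp_remainder (x : A) : ‖NormedSpace.exp x - 1 - x‖ ≤ ‖x‖ ^ 2 * Real.exp ‖x‖ := by
  have hs := NormedSpace.expSeries_summable' (𝕂 := ℂ) x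
  have hns := NormedSpace.norm_expSeries_summable' (𝕂 := ℂ) x
  have h0 : NormedSpace.exp x - 1 - x = ∑' m : ℕ, ((Nat.factorial (m + 2) : ℂ)⁻¹ • x ^ (m + 2)) := by
    rw [NormedSpace.exp_eq_tsum ℂ]
    beta_reduce
    rw [Summable.tsum_eq_zero_add hs, Summable.tsum_eq_zero_add ((summable_nat_add_iff 1).mpr hs)]
    simp [Nat.factorial]
  rw [h0]
  have hsum2 : Summable fun m : ℕ => ‖(Nat.factorial (m + 2) : ℂ)⁻¹ • x ^ (m + 2)‖ :=
    (summable_nat_add_iff 2).mpr hns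
  refine le_trans (norm_tsum_le_tsum_norm hsum2) ?_
  have hrhs : Summable fun m : ℕ => ‖x‖ ^ 2 * (‖x‖ ^ m / (Nat.factorial m)) :=
    (NormedSpace.expSeries_div_summable ‖x‖).mul_left _
  refine le_trans (Summable.tsum_le_tsum ?_ hsum2 hrhs) ?_
  · intro m
    rw [norm_smul, norm_inv, Complex.norm_natCast]
    calc (Nat.factorial (m+2) : ℝ)⁻¹ * ‖x ^ (m+2)‖
        ≤ (Nat.factorial (m+2) : ℝ)⁻¹ * ‖x‖ ^ (m + 2) := by
          exact mul_le_mul_of_nonneg_left (norm_pow_le' x (by omega)) (by positivity)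
      _ ≤ ‖x‖ ^ 2 * (‖x‖ ^ m / (Nat.factorial m)) := by
          rw [pow_add, mul_comm (‖x‖ ^ m)]
          rw [inv_mul_eq_div, mul_div_assoc]
          refine mul_le_mul_of_nonneg_left (div_le_div_of_nonneg_left ?_ ?_ ?_) (by positivity)
          · positivity
          · exact_mod_cast Nat.factorial_pos m
          · exact_mod_cast Nat.factorial_le (by omega : m ≤ m + 2)
  · rw [tsum_mul_left, Real.exp_eq_exp_ℝ, NormedSpace.exp_eq_tsum_div]

omit [NormedAlgebra ℂ A] [CompleteSpace A] in
lemma my_pow_sub_pow (a b : A) {M : ℝ} (ha : ‖a‖ ≤ M) (hb : ‖b‖ ≤ M) (hM : 0 ≤ M) :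
    ∀ N : ℕ, ‖a ^ (N + 1) - b ^ (N + 1)‖ ≤ (N + 1) * M ^ N * ‖a - b‖ := by
  intro N
  induction N with
  | zero => simpa using le_refl _
  | succ N ih =>
    have hid : a ^ (N + 2) - b ^ (N + 2)
        = a ^ (N + 1) * (a - b) + (a ^ (N + 1) - b ^ (N + 1)) * b := by
      noncomm_ring
    have hpa : ‖a ^ (N + 1)‖ ≤ M ^ (N + 1) :=
      (norm_pow_le' a N.succ_pos).trans (pow_le_pow_left₀ (norm_nonneg a) ha _)
    calc ‖a ^ (N + 2) - b ^ (N + 2)‖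
        ≤ ‖a ^ (N + 1) * (a - b)‖ + ‖(a ^ (N + 1) - b ^ (N + 1)) * b‖ := by
          rw [hid]; exact norm_add_le _ _
      _ ≤ M ^ (N + 1) * ‖a - b‖ + ((N + 1) * M ^ N * ‖a - b‖) * M := by
          gcongr ?_ + ?_
          · exact le_trans (norm_mul_le _ _) (by gcongr)
          · exact le_trans (norm_mul_le _ _) (by gcongr)
      _ ≤ (↑(N + 1) + 1) * M ^ (N + 1) * ‖a - b‖ := by
          push_cast
          rw [pow_succ]
          nlinarith [norm_nonneg (a - b), pow_nonneg hM N]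

lemma zeno_abstract (h1 : ‖(1 : A)‖ ≤ 1) (p a : A) (hp : p * p = p) (hpn : ‖p‖ ≤ 1) (z : ℂ) :
    Tendsto (fun N : ℕ => (p * NormedSpace.exp ((z / N) • a) * p) ^ N) atTop
      (nhds (p * NormedSpace.exp (z • (p * a * p)) * p)) := by
  set k := p * a * p with hk
  have hpk : p * k = k := by rw [hk, ← mul_assoc, ← mul_assoc, hp]
  have hkp : k * p = k := by rw [hk, mul_assoc, mul_assoc, hp, ← mul_assoc]
  have hpkp : p * k * p = k := by rw [hpk, hkp]
  have hcomm : Commute p k := by rw [Commute, SemiconjBy, hpk, hkp]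
  have hmul : ∀ X : A, ‖p * X * p‖ ≤ ‖X‖ := by
    intro X
    calc ‖p * X * p‖ ≤ ‖p * X‖ * ‖p‖ := norm_mul_le _ _
      _ ≤ ‖p‖ * ‖X‖ * ‖p‖ := by gcongr; exact norm_mul_le _ _
      _ ≤ 1 * ‖X‖ * 1 := by gcongr
      _ = ‖X‖ := by ring
  have hcs : ∀ w : ℂ, Commute p (NormedSpace.exp (w • k)) := fun w => ((hcomm.smul_right w).exp_right)
  have hpe : ∀ w : ℂ, p * NormedSpace.exp (w • k) * p = p * NormedSpace.exp (w • k) := by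
    intro w
    rw [mul_assoc, ← (hcs w).eq, ← mul_assoc, hp]
  have hBN : ∀ N : ℕ, N ≠ 0 → (p * NormedSpace.exp ((z / N) • k) * p) ^ N = p * NormedSpace.exp (z • k) * p := by
    intro N hN
    have hNc : ((N : ℂ)) ≠ 0 := Nat.cast_ne_zero.mpr hN
    calc (p * NormedSpace.exp ((z / N) • k) * p) ^ N
        = (p * NormedSpace.exp ((z / N) • k)) ^ N := by rw [hpe]
      _ = p ^ N * NormedSpace.exp ((z / N) • k) ^ N := (hcs _).mul_pow N
      _ = p * NormedSpace.exp (z • k) := by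
          have hppow : p ^ N = p := by
            obtain ⟨m, rfl⟩ := Nat.exists_eq_succ_of_ne_zero hN
            exact (IsIdempotentElem.pow_succ_eq m hp)
          letI : NormedAlgebra ℚ A := NormedAlgebra.restrictScalars ℚ ℂ A
          rw [hppow, ← NormedSpace.exp_nsmul, ← Nat.cast_smul_eq_nsmul ℂ, smul_smul,
            mul_div_cancel₀ _ hNc]
      _ = p * NormedSpace.exp (z • k) * p := (hpe z).symm
  rw [tendsto_iff_norm_sub_tendsto_zero]
  set C1 := ‖a‖ ^ 2 * Real.exp (‖z‖ * ‖a‖) + ‖k‖ ^ 2 * Real.exp (‖z‖ * ‖k‖) with hC1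
  have hC1' : 0 ≤ C1 := by positivity
  set R := max ‖a‖ ‖k‖ with hR
  set c := Real.exp (‖z‖ * R) with hc
  have hc1 : 1 ≤ c := Real.one_le_exp (by positivity)
  refine squeeze_zero_norm' ?_ (tendsto_const_div_atTop_nhds_zero_nat (c * (‖z‖ ^ 2 * C1)))
  filter_upwards [eventually_ge_atTop 1] with N hN
  have hN0 : N ≠ 0 := by omega
  have hNR : (1 : ℝ) ≤ N := by exact_mod_cast hN
  have hNpos : (0 : ℝ) < N := by linarith
  set s : ℂ := z / N with hs
  have hsn : ‖s‖ = ‖z‖ / N := by rw [hs, norm_div, Complex.norm_natCast]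
  set AN := p * NormedSpace.exp (s • a) * p with hAN
  set BN := p * NormedSpace.exp (s • k) * p with hBNdef
  -- difference bound
  have hdiff : ‖AN - BN‖ ≤ ‖z‖ ^ 2 / N ^ 2 * C1 := by
    have h2 : p * (s • k) * p = p * (s • a) * p := by
      simp only [mul_smul_comm, smul_mul_assoc, hpkp]
      rfl
    have hkey : AN - BN
        = p * (NormedSpace.exp (s • a) - 1 - s • a) * p - p * (NormedSpace.exp (s • k) - 1 - s • k) * p := by
      simp only [mul_sub, sub_mul, mul_one, one_mul, hAN, hBNdef]
      rw [h2]; abel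
    have hba : ‖s‖ * ‖a‖ ≤ ‖z‖ * ‖a‖ := by
      rw [hsn]; gcongr; exact div_le_self (norm_nonneg z) hNR
    have hbk : ‖s‖ * ‖k‖ ≤ ‖z‖ * ‖k‖ := by
      rw [hsn]; gcongr; exact div_le_self (norm_nonneg z) hNR
    have hterm : ∀ x : A, ‖s‖ * ‖x‖ ≤ ‖z‖ * ‖x‖ →
        ‖NormedSpace.exp (s • x) - 1 - s • x‖ ≤ ‖z‖ ^ 2 / N ^ 2 * (‖x‖ ^ 2 * Real.exp (‖z‖ * ‖x‖)) := by
      intro x hx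
      refine (my_exp_remainder (s • x)).trans ?_
      rw [norm_smul, hsn]
      calc (‖z‖ / N * ‖x‖) ^ 2 * Real.exp (‖z‖ / N * ‖x‖)
          ≤ (‖z‖ / N * ‖x‖) ^ 2 * Real.exp (‖z‖ * ‖x‖) := by
            gcongr
            exact div_le_self (norm_nonneg z) hNR
        _ = ‖z‖ ^ 2 / N ^ 2 * (‖x‖ ^ 2 * Real.exp (‖z‖ * ‖x‖)) := by ring
    rw [hkey, hC1]
    calc ‖p * (NormedSpace.exp (s • a) - 1 - s • a) * p - p * (NormedSpace.exp (s • k) - 1 - s • k) * p‖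
        ≤ ‖p * (NormedSpace.exp (s • a) - 1 - s • a) * p‖ + ‖p * (NormedSpace.exp (s • k) - 1 - s • k) * p‖ :=
          norm_sub_le _ _
      _ ≤ ‖NormedSpace.exp (s • a) - 1 - s • a‖ + ‖NormedSpace.exp (s • k) - 1 - s • k‖ := by
          exact add_le_add (hmul _) (hmul _)
      _ ≤ ‖z‖ ^ 2 / N ^ 2 * (‖a‖ ^ 2 * Real.exp (‖z‖ * ‖a‖))
            + ‖z‖ ^ 2 / N ^ 2 * (‖k‖ ^ 2 * Real.exp (‖z‖ * ‖k‖)) := by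
          exact add_le_add (hterm a hba) (hterm k hbk)
      _ = ‖z‖ ^ 2 / N ^ 2 * (‖a‖ ^ 2 * Real.exp (‖z‖ * ‖a‖) + ‖k‖ ^ 2 * Real.exp (‖z‖ * ‖k‖)) := by
          ring
  -- norm bounds on AN BN
  set M : ℝ := Real.exp (‖z‖ * R / N) with hM
  have hM1 : 1 ≤ M := Real.one_le_exp (by positivity)
  have hMnorm : ∀ x : A, ‖x‖ ≤ R → ‖p * NormedSpace.exp (s • x) * p‖ ≤ M := by
    intro x hx
    refine (hmul _).trans ((my_exp_norm_le h1 _).trans ?_)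
    rw [hM]
    refine Real.exp_le_exp.mpr ?_
    rw [norm_smul, hsn, div_mul_eq_mul_div]
    gcongr
  have hMA : ‖AN‖ ≤ M := hMnorm a (le_max_left _ _)
  have hMB : ‖BN‖ ≤ M := hMnorm k (le_max_right _ _)
  have hMpow : M ^ (N - 1) ≤ c := by
    calc M ^ (N - 1) ≤ M ^ N := pow_le_pow_right₀ hM1 (by omega)
      _ = c := by
        rw [hM, ← Real.exp_nat_mul, hc]
        congr 1
        field_simp
  have hfinal : ‖AN ^ N - p * NormedSpace.exp (z • k) * p‖ ≤ c * (‖z‖ ^ 2 * C1) / N := by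
    obtain ⟨m, rfl⟩ := Nat.exists_eq_succ_of_ne_zero hN0
    have hmain := my_pow_sub_pow AN BN hMA hMB (by linarith) m
    have hBNid : BN ^ (m + 1) = p * NormedSpace.exp (z • k) * p := hBN _ hN0
    have hMp : M ^ m ≤ c := by simpa using hMpow
    calc ‖AN ^ (m + 1) - p * NormedSpace.exp (z • k) * p‖
        = ‖AN ^ (m + 1) - BN ^ (m + 1)‖ := by rw [hBNid]
      _ ≤ (m + 1) * M ^ m * ‖AN - BN‖ := hmain
      _ ≤ (m + 1) * c * (‖z‖ ^ 2 / (m + 1 : ℕ) ^ 2 * C1) := by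
          refine mul_le_mul (mul_le_mul_of_nonneg_left hMp (by positivity)) ?_
            (norm_nonneg _) (by positivity)
          exact hdiff
      _ = c * (‖z‖ ^ 2 * C1) / (m + 1 : ℕ) := by
          have hne : ((m + 1 : ℕ) : ℝ) ≠ 0 := by positivity
          field_simp
          push_cast
          ring
  simpa using hfinal

end AbstractZeno

section MatrixZeno
open scoped Matrix.Norms.L2Operator

theorem zeno_matrix {n : ℕ} (H P : Matrix (Fin n) (Fin n) ℂ)
    (hH : H.IsHermitian) (hP : P.IsHermitian) (hP2 : P * P = P) (t : ℝ) :
    Tendsto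
      (fun N : ℕ =>
        (P * NormedSpace.exp ((-(Complex.I * t) / (N : ℂ)) • H) * P) ^ N)
      atTop
      (nhds (P * NormedSpace.exp ((-(Complex.I * t)) • (P * H * P)) * P)) := by
  have h1 : ‖(1 : Matrix (Fin n) (Fin n) ℂ)‖ ≤ 1 := by
    rw [Matrix.cstar_norm_def, _root_.map_one]
    exact ContinuousLinearMap.norm_id_le
  have hpn : ‖P‖ ≤ 1 := by
    have h := CStarRing.norm_star_mul_self (x := P)
    rw [Matrix.star_eq_conjTranspose, hP, hP2] at h
    nlinarith [norm_nonneg P]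
  exact zeno_abstract h1 P H hP2 hpn (-(Complex.I * t))

end MatrixZeno

/-- Zeno dynamics for a general orthogonal projection:
`(P e^{-iHt/N} P)^N → P e^{-it PHP} P` as `N → ∞`. -/
theorem zeno_projection_limit {n : ℕ} (H P : Matrix (Fin n) (Fin n) ℂ)
    (hH : H.IsHermitian) (hP : P.IsHermitian) (hP2 : P * P = P) (t : ℝ) :
    Tendsto
      (fun N : ℕ =>
        (P * NormedSpace.exp ((-(Complex.I * t) / (N : ℂ)) • H) * P) ^ N)
      atTop
      (nhds (P * NormedSpace.exp ((-(Complex.I * t)) • (P * H * P)) * P)) := by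
  exact zeno_matrix H P hH hP hP2 t
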